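/- Let α ∈ (0,1], u > 0, and let F : [0,1]^n → [0,1] be monotone, twice continuously differentiable, and continuous DR-submodular. Then the function x ↦ max_{τ∈[0,1]} H̃(x,τ) is monotone and up-concave on [0,1]^n. -/

import Mathlib

open MeasureTheory

/-- The unit cube `[0,1]^n` in `ℝⁿ` (with the Euclidean norm). -/
def cube (n : ℕ) : Set (EuclideanSpace ℝ (Fin n)) :=
  {x | ∀ i, x i ∈ Set.Icc (0:ℝ) 1}

/-- The `u`-smoothed CVaR auxiliary function
`H̃(x,τ) = (1/u)·∫₀ᵘ (τ + ξ - (1/α)·max{τ + ξ - F(x), 0}) dξ`,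
expressed as a function of the value `v = F(x)`. -/
noncomputable def smoothAuxH (α u : ℝ) (v τ : ℝ) : ℝ :=
  (1 / u) * ∫ ξ in (0:ℝ)..u, (τ + ξ - (1 / α) * max (τ + ξ - v) 0)

/-- `max_{τ ∈ [0,1]} H̃(x,τ)`, as a function of `v = F(x)`. -/
noncomputable def maxSmoothAuxH (α u : ℝ) (v : ℝ) : ℝ :=
  sSup ((fun τ => smoothAuxH α u v τ) '' Set.Icc (0:ℝ) 1)

lemma integrand_cont (α v τ : ℝ) :
    Continuous (fun ξ : ℝ => τ + ξ - (1 / α) * max (τ + ξ - v) 0) := by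
  fun_prop

lemma h_mono {α u : ℝ} (hα : 0 < α) (hu : 0 < u) {v1 v2 τ : ℝ} (h : v1 ≤ v2) :
    smoothAuxH α u v1 τ ≤ smoothAuxH α u v2 τ := by
  unfold smoothAuxH
  have : (∫ ξ in (0:ℝ)..u, (τ + ξ - (1 / α) * max (τ + ξ - v1) 0)) ≤
      ∫ ξ in (0:ℝ)..u, (τ + ξ - (1 / α) * max (τ + ξ - v2) 0) := by
    apply intervalIntegral.integral_mono_on hu.le
      ((integrand_cont α v1 τ).intervalIntegrable _ _)
      ((integrand_cont α v2 τ).intervalIntegrable _ _)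
    intro ξ _
    have h1 : max (τ + ξ - v2) 0 ≤ max (τ + ξ - v1) 0 :=
      max_le_max (by linarith) le_rfl
    nlinarith [one_div_pos.mpr hα]
  have h1u : (0:ℝ) < 1 / u := one_div_pos.mpr hu
  nlinarith

lemma h_concave {α u : ℝ} (hα : 0 < α) (hu : 0 < u) {v1 v2 τ1 τ2 a b : ℝ}
    (ha : 0 ≤ a) (hb : 0 ≤ b) (hab : a + b = 1) :
    a * smoothAuxH α u v1 τ1 + b * smoothAuxH α u v2 τ2 ≤
      smoothAuxH α u (a * v1 + b * v2) (a * τ1 + b * τ2) := by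
  unfold smoothAuxH
  have hI1 : IntervalIntegrable (fun ξ : ℝ => τ1 + ξ - (1 / α) * max (τ1 + ξ - v1) 0) volume 0 u :=
    (integrand_cont α v1 τ1).intervalIntegrable 0 u
  have hI2 : IntervalIntegrable (fun ξ : ℝ => τ2 + ξ - (1 / α) * max (τ2 + ξ - v2) 0) volume 0 u :=
    (integrand_cont α v2 τ2).intervalIntegrable 0 u
  have key : (∫ ξ in (0:ℝ)..u, (a * (τ1 + ξ - (1 / α) * max (τ1 + ξ - v1) 0)
        + b * (τ2 + ξ - (1 / α) * max (τ2 + ξ - v2) 0))) ≤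
      ∫ ξ in (0:ℝ)..u, ((a * τ1 + b * τ2) + ξ
        - (1 / α) * max ((a * τ1 + b * τ2) + ξ - (a * v1 + b * v2)) 0) := by
    apply intervalIntegral.integral_mono_on hu.le
      (((continuous_const.mul (integrand_cont α v1 τ1)).add
        (continuous_const.mul (integrand_cont α v2 τ2))).intervalIntegrable _ _)
      ((integrand_cont α (a*v1+b*v2) (a*τ1+b*τ2)).intervalIntegrable _ _)
    intro ξ _
    have hmax : max ((a * τ1 + b * τ2) + ξ - (a * v1 + b * v2)) 0 ≤
        a * max (τ1 + ξ - v1) 0 + b * max (τ2 + ξ - v2) 0 := by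
      apply max_le
      · have heq : (a * τ1 + b * τ2) + ξ - (a * v1 + b * v2)
            = a * (τ1 + ξ - v1) + b * (τ2 + ξ - v2) := by linear_combination (-ξ) * hab
        rw [heq]
        exact add_le_add (mul_le_mul_of_nonneg_left (le_max_left _ _) ha)
          (mul_le_mul_of_nonneg_left (le_max_left _ _) hb)
      · positivity
    have hξ : a * ξ + b * ξ = ξ := by linear_combination ξ * hab
    simp only [Pi.add_apply, Pi.mul_apply]
    nlinarith [mul_le_mul_of_nonneg_left hmax (one_div_pos.mpr hα).le, hξ]
  rw [intervalIntegral.integral_add (hI1.const_mul a) (hI2.const_mul b),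
    intervalIntegral.integral_const_mul, intervalIntegral.integral_const_mul] at key
  have h1u : (0:ℝ) < 1 / u := one_div_pos.mpr hu
  nlinarith

lemma h_upper {α u : ℝ} (hα : 0 < α) (hu : 0 < u) {v τ : ℝ} (hτ : τ ≤ 1) :
    smoothAuxH α u v τ ≤ 1 + u := by
  unfold smoothAuxH
  have key : (∫ ξ in (0:ℝ)..u, (τ + ξ - (1 / α) * max (τ + ξ - v) 0)) ≤
      ∫ _ in (0:ℝ)..u, (1 + u : ℝ) := by
    apply intervalIntegral.integral_mono_on hu.le
      ((integrand_cont α v τ).intervalIntegrable _ _)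
      (intervalIntegrable_const)
    intro ξ hξ
    have h0 : 0 ≤ max (τ + ξ - v) 0 := le_max_right _ _
    have : ξ ≤ u := hξ.2
    nlinarith [one_div_pos.mpr hα]
  rw [intervalIntegral.integral_const] at key
  have h1u : (0:ℝ) < 1 / u := one_div_pos.mpr hu
  simp only [smul_eq_mul, sub_zero] at key
  calc (1/u) * ∫ ξ in (0:ℝ)..u, (τ + ξ - (1 / α) * max (τ + ξ - v) 0)
      ≤ (1/u) * (u * (1+u)) := by nlinarith
    _ = 1 + u := by field_simp

lemma G_ne (α u v : ℝ) : ((fun τ => smoothAuxH α u v τ) '' Set.Icc (0:ℝ) 1).Nonempty :=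
  ⟨_, ⟨0, by simp, rfl⟩⟩

lemma G_bdd {α u : ℝ} (hα : 0 < α) (hu : 0 < u) (v : ℝ) :
    BddAbove ((fun τ => smoothAuxH α u v τ) '' Set.Icc (0:ℝ) 1) := by
  refine ⟨1 + u, ?_⟩
  rintro y ⟨τ, hτ, rfl⟩
  exact h_upper hα hu hτ.2

lemma G_mono {α u : ℝ} (hα : 0 < α) (hu : 0 < u) {v1 v2 : ℝ} (h : v1 ≤ v2) :
    maxSmoothAuxH α u v1 ≤ maxSmoothAuxH α u v2 := by
  apply csSup_le (G_ne α u v1)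
  rintro y ⟨τ, hτ, rfl⟩
  exact (h_mono hα hu h).trans (le_csSup (G_bdd hα hu v2) ⟨τ, hτ, rfl⟩)

lemma G_concave {α u : ℝ} (hα : 0 < α) (hu : 0 < u) {v1 v2 a b : ℝ}
    (ha : 0 ≤ a) (hb : 0 ≤ b) (hab : a + b = 1) :
    a * maxSmoothAuxH α u v1 + b * maxSmoothAuxH α u v2 ≤
      maxSmoothAuxH α u (a * v1 + b * v2) := by
  apply le_of_forall_pos_le_add
  intro ε hε
  obtain ⟨y1, ⟨τ1, hτ1, rfl⟩, hy1⟩ :=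
    exists_lt_of_lt_csSup (G_ne α u v1)
      (show maxSmoothAuxH α u v1 - ε < sSup ((fun τ => smoothAuxH α u v1 τ) '' Set.Icc (0:ℝ) 1)
        from sub_lt_self _ hε)
  obtain ⟨y2, ⟨τ2, hτ2, rfl⟩, hy2⟩ :=
    exists_lt_of_lt_csSup (G_ne α u v2)
      (show maxSmoothAuxH α u v2 - ε < sSup ((fun τ => smoothAuxH α u v2 τ) '' Set.Icc (0:ℝ) 1)
        from sub_lt_self _ hε)
  have hmem : a * τ1 + b * τ2 ∈ Set.Icc (0:ℝ) 1 := by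
    constructor
    · have := hτ1.1; have := hτ2.1; positivity
    · have h1 := hτ1.2; have h2 := hτ2.2
      nlinarith [mul_le_mul_of_nonneg_left h1 ha, mul_le_mul_of_nonneg_left h2 hb]
  have hle : smoothAuxH α u (a * v1 + b * v2) (a * τ1 + b * τ2) ≤
      maxSmoothAuxH α u (a * v1 + b * v2) :=
    le_csSup (G_bdd hα hu _) ⟨_, hmem, rfl⟩
  have hcc := h_concave (v1 := v1) (v2 := v2) (τ1 := τ1) (τ2 := τ2) hα hu ha hb hab
  nlinarith [mul_le_mul_of_nonneg_left hy1.le ha, mul_le_mul_of_nonneg_left hy2.le hb,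
    mul_le_mul_of_nonneg_left (le_refl ε) ha]

lemma single_decomp {n : ℕ} (d : EuclideanSpace ℝ (Fin n)) :
    d = ∑ i, d i • EuclideanSpace.single i (1:ℝ) := by
  have := (EuclideanSpace.basisFun (Fin n) ℝ).toBasis.sum_repr d
  simp only [OrthonormalBasis.coe_toBasis_repr_apply, OrthonormalBasis.coe_toBasis,
    EuclideanSpace.basisFun_repr, EuclideanSpace.basisFun_apply] at this
  exact this.symm

section
variable {n : ℕ} {F : EuclideanSpace ℝ (Fin n) → ℝ}

lemma curve_hasDerivAt (x d : EuclideanSpace ℝ (Fin n)) (t : ℝ) :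
    HasDerivAt (fun s : ℝ => x + s • d) d t := by
  simpa using ((hasDerivAt_id t).smul_const d).const_add x

lemma second_deriv_expand (hC2 : ContDiff ℝ 2 F) (y w e : EuclideanSpace ℝ (Fin n)) :
    fderiv ℝ (fun z => fderiv ℝ F z w) y e = fderiv ℝ (fderiv ℝ F) y e w := by
  have hdF' : Differentiable ℝ (fderiv ℝ F) :=
    (hC2.fderiv_right (m := 1) (by norm_num)).differentiable (by norm_num)
  have h : HasFDerivAt (fun z => fderiv ℝ F z w)
      ((ContinuousLinearMap.apply ℝ ℝ w).comp (fderiv ℝ (fderiv ℝ F) y)) y :=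
    (ContinuousLinearMap.apply ℝ ℝ w).hasFDerivAt.comp y (hdF' y).hasFDerivAt
  rw [h.fderiv]
  rfl

lemma hessian_nonpos (hC2 : ContDiff ℝ 2 F)
    (hDR : ∀ x ∈ cube n, ∀ i j : Fin n,
      fderiv ℝ (fun y => fderiv ℝ F y (EuclideanSpace.single j (1:ℝ))) x
        (EuclideanSpace.single i (1:ℝ)) ≤ 0)
    {y : EuclideanSpace ℝ (Fin n)} (hy : y ∈ cube n)
    {d : EuclideanSpace ℝ (Fin n)} (hd : ∀ i, 0 ≤ d i) :
    fderiv ℝ (fderiv ℝ F) y d d ≤ 0 := by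
  have hB : ∀ i j : Fin n,
      fderiv ℝ (fderiv ℝ F) y (EuclideanSpace.single i 1) (EuclideanSpace.single j 1) ≤ 0 := by
    intro i j
    rw [← second_deriv_expand hC2]
    exact hDR y hy i j
  calc fderiv ℝ (fderiv ℝ F) y d d
      = fderiv ℝ (fderiv ℝ F) y (∑ i, d i • EuclideanSpace.single i (1:ℝ))
          (∑ j, d j • EuclideanSpace.single j (1:ℝ)) := by rw [← single_decomp d]
    _ = ∑ i, ∑ j, d i * (d j *
          fderiv ℝ (fderiv ℝ F) y (EuclideanSpace.single i 1) (EuclideanSpace.single j 1)) := by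
        simp only [map_sum, _root_.map_smul, ContinuousLinearMap.sum_apply,
          ContinuousLinearMap.smul_apply, smul_eq_mul, Finset.mul_sum]
        rw [Finset.sum_comm]
        exact Finset.sum_congr rfl fun i _ => Finset.sum_congr rfl fun j _ => by ring
    _ ≤ 0 := by
        apply Finset.sum_nonpos; intro i _
        apply Finset.sum_nonpos; intro j _
        exact mul_nonpos_iff.mpr (Or.inl ⟨(hd i),
          mul_nonpos_iff.mpr (Or.inl ⟨(hd j), hB i j⟩)⟩)

lemma inner_concave (hC2 : ContDiff ℝ 2 F)
    (hDR : ∀ x ∈ cube n, ∀ i j : Fin n,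
      fderiv ℝ (fun y => fderiv ℝ F y (EuclideanSpace.single j (1:ℝ))) x
        (EuclideanSpace.single i (1:ℝ)) ≤ 0)
    (x : EuclideanSpace ℝ (Fin n)) (d : EuclideanSpace ℝ (Fin n)) (hd : ∀ i, 0 ≤ d i) :
    ConcaveOn ℝ {t : ℝ | x + t • d ∈ cube n} (fun t => F (x + t • d)) := by
  set T : Set ℝ := {t : ℝ | x + t • d ∈ cube n} with hT
  have hTc : Convex ℝ T := by
    intro t1 ht1 t2 ht2 a b ha hb hab
    intro i
    have h1 := ht1 i; have h2 := ht2 i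
    simp only [PiLp.add_apply, PiLp.smul_apply, smul_eq_mul, Set.mem_Icc] at h1 h2 ⊢
    have e1 : x i + (a * t1 + b * t2) * d i
        = a * (x i + t1 * d i) + b * (x i + t2 * d i) := by
      linear_combination (-(x i)) * hab
    rw [e1]
    constructor
    · have := mul_nonneg ha h1.1; have := mul_nonneg hb h2.1; linarith
    · have := mul_le_mul_of_nonneg_left h1.2 ha
      have := mul_le_mul_of_nonneg_left h2.2 hb
      linarith
  have hdF : Differentiable ℝ F := hC2.differentiable (by norm_num)
  have hdF' : Differentiable ℝ (fderiv ℝ F) :=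
    (hC2.fderiv_right (m := 1) (by norm_num)).differentiable (by norm_num)
  have hφ' : ∀ t : ℝ, HasDerivAt (fun s : ℝ => F (x + s • d))
      (fderiv ℝ F (x + t • d) d) t := fun t =>
    (hdF _).hasFDerivAt.comp_hasDerivAt t (curve_hasDerivAt x d t)
  have hψ' : ∀ t : ℝ, HasDerivAt (fun s : ℝ => fderiv ℝ F (x + s • d) d)
      (fderiv ℝ (fderiv ℝ F) (x + t • d) d d) t := by
    intro t
    have h1 : HasFDerivAt (fun z => fderiv ℝ F z d)
        ((ContinuousLinearMap.apply ℝ ℝ d).comp (fderiv ℝ (fderiv ℝ F) (x + t • d)))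
        (x + t • d) :=
      (ContinuousLinearMap.apply ℝ ℝ d).hasFDerivAt.comp _ (hdF' _).hasFDerivAt
    exact h1.comp_hasDerivAt t (curve_hasDerivAt x d t)
  have hderiv : deriv (fun s : ℝ => F (x + s • d)) = fun t => fderiv ℝ F (x + t • d) d :=
    funext fun t => (hφ' t).deriv
  apply concaveOn_of_deriv2_nonpos' hTc
  · exact fun t _ => (hφ' t).differentiableAt.differentiableWithinAt
  · rw [hderiv]
    exact fun t _ => (hψ' t).differentiableAt.differentiableWithinAt
  · intro t ht
    have : deriv^[2] (fun s : ℝ => F (x + s • d)) t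
        = fderiv ℝ (fderiv ℝ F) (x + t • d) d d := by
      show deriv (deriv fun s : ℝ => F (x + s • d)) t = _
      rw [hderiv]
      exact (hψ' t).deriv
    rw [this]
    exact hessian_nonpos hC2 hDR ht hd

end


/-- If `F : [0,1]ⁿ → [0,1]` is monotone, twice continuously differentiable and continuous
DR-submodular, then `x ↦ max_{τ∈[0,1]} H̃(x,τ)` is monotone and up-concave on `[0,1]ⁿ`. -/
theorem stmt4 (n : ℕ) (α u : ℝ) (hα : α ∈ Set.Ioc (0:ℝ) 1) (hu : 0 < u)
    (F : EuclideanSpace ℝ (Fin n) → ℝ)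
    (hrange : ∀ x ∈ cube n, F x ∈ Set.Icc (0:ℝ) 1)
    (hmono : ∀ x ∈ cube n, ∀ y ∈ cube n, (∀ i, x i ≤ y i) → F x ≤ F y)
    (hC2 : ContDiff ℝ 2 F)
    (hDR : ∀ x ∈ cube n, ∀ i j : Fin n,
      fderiv ℝ (fun y => fderiv ℝ F y (EuclideanSpace.single j (1:ℝ))) x
        (EuclideanSpace.single i (1:ℝ)) ≤ 0) :
    (∀ x ∈ cube n, ∀ y ∈ cube n, (∀ i, x i ≤ y i) →
      maxSmoothAuxH α u (F x) ≤ maxSmoothAuxH α u (F y)) ∧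
    (∀ x ∈ cube n, ∀ d : EuclideanSpace ℝ (Fin n), (∀ i, 0 ≤ d i) →
      ConcaveOn ℝ {t : ℝ | x + t • d ∈ cube n}
        (fun t => maxSmoothAuxH α u (F (x + t • d)))) := by
  obtain ⟨hα0, hα1⟩ := hα
  constructor
  · intro x hx y hy hxy
    exact G_mono hα0 hu (hmono x hx y hy hxy)
  · intro x hx d hd
    have hφ := inner_concave hC2 hDR x d hd
    refine ⟨hφ.1, ?_⟩
    intro t1 ht1 t2 ht2 a b ha hb hab
    have h2 : a * F (x + t1 • d) + b * F (x + t2 • d) ≤ F (x + (a • t1 + b • t2) • d) := by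
      have := hφ.2 ht1 ht2 ha hb hab
      simpa [smul_eq_mul] using this
    calc a • maxSmoothAuxH α u (F (x + t1 • d)) + b • maxSmoothAuxH α u (F (x + t2 • d))
        = a * maxSmoothAuxH α u (F (x + t1 • d)) + b * maxSmoothAuxH α u (F (x + t2 • d)) := by
          simp [smul_eq_mul]
      _ ≤ maxSmoothAuxH α u (a * F (x + t1 • d) + b * F (x + t2 • d)) :=
          G_concave hα0 hu ha hb hab
      _ ≤ maxSmoothAuxH α u (F (x + (a • t1 + b • t2) • d)) := G_mono hα0 hu h2
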